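/- Let u₁, v₁ ∈ ℝ^m and u₂, v₂ ∈ ℝ^n be unit vectors, and let u, v ∈ ℝ^{m+n} be the concatenated vectors u = (u₁, u₂) and v = (v₁, v₂). Then sin²∠(u₁, v₁) + sin²∠(u₂, v₂) ≤ 2·sin²∠(u, v). -/

import Mathlib

open MeasureTheory ProbabilityTheory Matrix

theorem Matrix.isHermitian_transpose_mul_self {α : Type*} {m n : Type*} [CommSemiring α] [StarRing α]
    [TrivialStar α] [Fintype m] (A : Matrix m n α) : (Aᵀ * A).IsHermitian := by
  rw [IsHermitian, conjTranspose_eq_transpose_of_trivial, transpose_mul, transpose_transpose]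

noncomputable def sval {m n : ℕ} (A : Matrix (Fin m) (Fin n) ℝ) (k : ℕ) : ℝ :=
  if h : k - 1 < n then
    Real.sqrt (((Matrix.isHermitian_transpose_mul_self A).eigenvalues ∘
      Tuple.sort (Matrix.isHermitian_transpose_mul_self A).eigenvalues)
      (Fin.rev ⟨k - 1, h⟩))
  else 0

noncomputable def spNorm {m n : Type*} [Fintype m] [Fintype n] [DecidableEq n]
    (A : Matrix m n ℝ) : ℝ :=
  ‖LinearMap.toContinuousLinearMap (Matrix.toEuclideanLin A)‖

noncomputable def sinAngle {d : ℕ} (u v : Fin d → ℝ) : ℝ :=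
  Real.sqrt (1 - (u ⬝ᵥ v) ^ 2 / ((u ⬝ᵥ u) * (v ⬝ᵥ v)))

def Concentrated {Ω : Type*} [MeasurableSpace Ω] (μ : Measure Ω) {m n : ℕ}
    (E : Ω → Matrix (Fin m) (Fin n) ℝ) (C₁ c₁ γ : ℝ) : Prop :=
  ∀ (u : Fin m → ℝ) (v : Fin n → ℝ), u ⬝ᵥ u = 1 → v ⬝ᵥ v = 1 →
    ∀ t : ℝ, 0 < t →
      μ {ω | t < |u ⬝ᵥ ((E ω) *ᵥ v)|} ≤ ENNReal.ofReal (C₁ * Real.exp (-c₁ * t ^ γ))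

noncomputable def symMat {m n : ℕ} (E : Matrix (Fin m) (Fin n) ℝ) :
    Matrix (Fin (m + n)) (Fin (m + n)) ℝ :=
  (Matrix.reindex finSumFinEquiv finSumFinEquiv) (Matrix.fromBlocks 0 E Eᵀ 0)

noncomputable def eigVal {d : ℕ} (M : Matrix (Fin d) (Fin d) ℝ) (k : ℕ) : ℝ := by
  classical
  exact if hM : M.IsHermitian then
    (if h : k - 1 < d then
      ((hM.eigenvalues ∘ Tuple.sort hM.eigenvalues) (Fin.rev ⟨k - 1, h⟩))
    else 0)
  else 0

noncomputable def toE {n : ℕ} (v : Fin n → ℝ) : EuclideanSpace ℝ (Fin n) :=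
  (WithLp.equiv 2 (Fin n → ℝ)).symm v

noncomputable def projSub {n : ℕ} (K : Submodule ℝ (EuclideanSpace ℝ (Fin n))) :
    EuclideanSpace ℝ (Fin n) →L[ℝ] EuclideanSpace ℝ (Fin n) :=
  K.subtypeL.comp K.orthogonalProjectionOnto

noncomputable def projSpan {n : ℕ} (S : Set (Fin n → ℝ)) :
    EuclideanSpace ℝ (Fin n) →L[ℝ] EuclideanSpace ℝ (Fin n) :=
  projSub (Submodule.span ℝ (toE '' S))

noncomputable def sinAngleSub {n : ℕ} (S T : Set (Fin n → ℝ)) : ℝ :=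
  ‖projSpan S - projSpan T‖

def IsBernoulliMatrix {Ω : Type*} [MeasurableSpace Ω] (μ : Measure Ω) {n : ℕ}
    (E : Ω → Matrix (Fin n) (Fin n) ℝ) : Prop :=
  (∀ i j, Measurable fun ω => E ω i j) ∧
  iIndepFun (fun (p : Fin n × Fin n) ω => E ω p.1 p.2) μ ∧
  (∀ i j, μ {ω | E ω i j = 1} = ENNReal.ofReal (1/2) ∧
          μ {ω | E ω i j = -1} = ENNReal.ofReal (1/2))


lemma cs_aux {d : ℕ} (u v : Fin d → ℝ) : (u ⬝ᵥ v)^2 ≤ (u ⬝ᵥ u) * (v ⬝ᵥ v) := by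
  simpa [dotProduct, sq] using Finset.sum_mul_sq_le_sq_mul_sq Finset.univ u v

lemma appdot_aux {m n : ℕ} (u₁ v₁ : Fin m → ℝ) (u₂ v₂ : Fin n → ℝ) :
    Fin.append u₁ u₂ ⬝ᵥ Fin.append v₁ v₂ = u₁ ⬝ᵥ v₁ + u₂ ⬝ᵥ v₂ := by
  simp [dotProduct, Fin.sum_univ_add]

theorem stmt11 {m n : ℕ} (u₁ v₁ : Fin m → ℝ) (u₂ v₂ : Fin n → ℝ)
    (hu₁ : u₁ ⬝ᵥ u₁ = 1) (hv₁ : v₁ ⬝ᵥ v₁ = 1)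
    (hu₂ : u₂ ⬝ᵥ u₂ = 1) (hv₂ : v₂ ⬝ᵥ v₂ = 1) :
    sinAngle u₁ v₁ ^ 2 + sinAngle u₂ v₂ ^ 2 ≤
      2 * sinAngle (Fin.append u₁ u₂) (Fin.append v₁ v₂) ^ 2 := by
  have h1 := cs_aux u₁ v₁
  have h2 := cs_aux u₂ v₂
  rw [hu₁, hv₁] at h1
  rw [hu₂, hv₂] at h2
  have huu : Fin.append u₁ u₂ ⬝ᵥ Fin.append u₁ u₂ = 2 := by
    rw [appdot_aux, hu₁, hu₂]; norm_num
  have hvv : Fin.append v₁ v₂ ⬝ᵥ Fin.append v₁ v₂ = 2 := by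
    rw [appdot_aux, hv₁, hv₂]; norm_num
  set a := u₁ ⬝ᵥ v₁
  set b := u₂ ⬝ᵥ v₂
  have ha : a ^ 2 ≤ 1 := by simpa using h1
  have hb : b ^ 2 ≤ 1 := by simpa using h2
  unfold sinAngle
  rw [hu₁, hv₁, hu₂, hv₂, huu, hvv, appdot_aux]
  rw [Real.sq_sqrt, Real.sq_sqrt, Real.sq_sqrt]
  · nlinarith [sq_nonneg (a - b)]
  · nlinarith [sq_nonneg (a + b)]
  · nlinarith
  · nlinarith
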